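/- Let α ∈ (0,1) with α = β, and let s(d) = a − b denote the spread of d = (b,a)ᵀ. For any d, the composed updates satisfy: s(S₂S₁ d) = s(d), s(S₁S₂ d) = s(d), s(S₄S₃ d) = s(d), and s(S₃S₄ d) = s(d). That is, any two-period block consisting of one limit-type and one market-type trade leaves the spread unchanged. -/

import Mathlib

open Matrix

theorem stmt_7 (α : ℝ) (hα : α ∈ Set.Ioo (0:ℝ) 1) :
    let S1 : Matrix (Fin 2) (Fin 2) ℝ := !![1/(1+α), α/(1+α); 0, 1]
    let S2 : Matrix (Fin 2) (Fin 2) ℝ := !![1, 0; -α, 1+α]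
    let S3 : Matrix (Fin 2) (Fin 2) ℝ := !![1, 0; α/(1+α), 1/(1+α)]
    let S4 : Matrix (Fin 2) (Fin 2) ℝ := !![1+α, -α; 0, 1]
    let s : (Fin 2 → ℝ) → ℝ := fun d => d 1 - d 0
    ∀ d : Fin 2 → ℝ,
      s ((S2 * S1).mulVec d) = s d ∧ s ((S1 * S2).mulVec d) = s d ∧
      s ((S4 * S3).mulVec d) = s d ∧ s ((S3 * S4).mulVec d) = s d := by
  intro S1 S2 S3 S4 s d
  have h1 : (1:ℝ) + α ≠ 0 := by nlinarith [hα.1]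
  simp only [S1, S2, S3, S4, s, Matrix.mul_fin_two, Matrix.mulVec,
    dotProduct, Fin.sum_univ_two, Matrix.cons_val', Matrix.cons_val_zero,
    Matrix.cons_val_one, Matrix.head_cons, Matrix.empty_val',
    Matrix.cons_val_fin_one, Matrix.head_fin_const, Matrix.of_apply]
  refine ⟨?_, ?_, ?_, ?_⟩ <;> field_simp <;> ring
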